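/- Let X and Y be disjoint finite sets of positive integers with X nonempty, and let f : X → Y be a function such that (a) every x ∈ X divides f(x), and (b) for every y ∈ Y that has at least two preimages under f, every preimage x of y satisfies v_p(x) < v_p(y) for every prime p dividing y. Then ∑_{x∈X} x < ∑_{y∈Y} y. In particular, X and Y cannot have the same sum. -/

import Mathlib

open Finset

lemma sum_divisors_lt_mul_rad {m : ℕ} (hm : 1 < m) :
    ∑ d ∈ m.divisors, d < m * ∏ p ∈ m.primeFactors, p := by
  have hm0 : m ≠ 0 := by omega
  have hrw : m * ∏ p ∈ m.primeFactors, p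
      = ∏ p ∈ m.primeFactors, p ^ (m.factorization p + 1) := by
    have hm' := Nat.factorization_prod_pow_eq_self hm0
    rw [Finsupp.prod, Nat.support_factorization] at hm'
    nth_rewrite 1 [← hm']
    rw [← Finset.prod_mul_distrib]
    exact Finset.prod_congr rfl fun p _ => (pow_succ p _).symm
  rw [Nat.sum_divisors hm0, hrw]
  refine Finset.prod_lt_prod_of_nonempty ?_ ?_ (Nat.nonempty_primeFactors.2 hm)
  · intro p hp
    refine Finset.sum_pos (fun k hk => pow_pos ?_ _) ⟨0, by simp⟩
    exact (Nat.prime_of_mem_primeFactors hp).pos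
  · intro p hp
    exact Nat.geomSum_lt (Nat.prime_of_mem_primeFactors hp).two_le
      (fun k hk => Finset.mem_range.mp hk)

/-- If `X` and `Y` are disjoint finite sets of positive integers, `X` is
nonempty, and `f` maps `X` into `Y` with (a) every `x ∈ X` dividing `f x`, and
(b) whenever `y ∈ Y` has at least two preimages, every preimage `x` of `y`
satisfies `v_p x < v_p y` for every prime `p ∣ y`, then the sum of `X` is
strictly less than the sum of `Y`. -/
theorem sum_lt_sum_of_dominating_map
    (X Y : Finset ℕ) (hXY : Disjoint X Y) (hX : X.Nonempty)
    (hXpos : ∀ x ∈ X, 0 < x) (hYpos : ∀ y ∈ Y, 0 < y)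
    (f : ℕ → ℕ) (hf : ∀ x ∈ X, f x ∈ Y)
    (hdvd : ∀ x ∈ X, x ∣ f x)
    (hval : ∀ y ∈ Y,
      (∃ x₁ ∈ X, ∃ x₂ ∈ X, x₁ ≠ x₂ ∧ f x₁ = y ∧ f x₂ = y) →
      ∀ x ∈ X, f x = y →
        ∀ q : ℕ, q.Prime → q ∣ y → x.factorization q < y.factorization q) :
    ∑ x ∈ X, x < ∑ y ∈ Y, y := by
  classical
  have key : ∀ y ∈ Y, (X.filter (fun x => f x = y)).Nonempty →
      ∑ x ∈ X.filter (fun x => f x = y), x < y := by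
    intro y hyY hS
    set S := X.filter (fun x => f x = y) with hSdef
    have hy : 0 < y := hYpos y hyY
    by_cases hcard : 2 ≤ S.card
    · -- multi-preimage case
      obtain ⟨a, ha, b, hb, hab⟩ := Finset.one_lt_card.mp hcard
      have haX := (Finset.mem_filter.mp ha).1
      have hbX := (Finset.mem_filter.mp hb).1
      have hv := hval y hyY ⟨a, haX, b, hbX, hab,
        (Finset.mem_filter.mp ha).2, (Finset.mem_filter.mp hb).2⟩
      set r := ∏ p ∈ y.primeFactors, p with hrdef
      have hr : r ∣ y := Nat.prod_primeFactors_dvd y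
      have hr0 : 0 < r := Nat.pos_of_dvd_of_pos hr hy
      set m := y / r with hmdef
      have hm0 : 0 < m := Nat.div_pos (Nat.le_of_dvd hy hr) hr0
      have hmy : m * r = y := Nat.div_mul_cancel hr
      have hmdvd : m ∣ y := Nat.div_dvd_of_dvd hr
      have hfacm : m.factorization = y.factorization - r.factorization :=
        Nat.factorization_div hr
      have hr1 : ∀ q, r.factorization q ≤ 1 := by
        intro q
        rw [hrdef, Nat.factorization_prod
          (fun p hp => (Nat.prime_of_mem_primeFactors hp).ne_zero)]
        rw [Finset.sum_apply']
        have : ∀ p ∈ y.primeFactors, (Nat.factorization p) q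
            = if p = q then 1 else 0 := by
          intro p hp
          rw [(Nat.prime_of_mem_primeFactors hp).factorization, Finsupp.single_apply]
        rw [Finset.sum_congr rfl this, Finset.sum_ite_eq' y.primeFactors q (fun _ => 1)]
        split <;> omega
      have hrprime : ∀ q, q.Prime → q ∣ y → 1 ≤ r.factorization q := by
        intro q hq hqy
        have hqmem : q ∈ y.primeFactors := Nat.mem_primeFactors.mpr ⟨hq, hqy, hy.ne'⟩
        have : q ∣ r := Finset.dvd_prod_of_mem _ hqmem
        have hr0' : r ≠ 0 := hr0.ne'
        exact (Nat.Prime.factorization_pos_of_dvd hq hr0' this)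
      have hsub : S ⊆ m.divisors := by
        intro x hx
        have hxX := (Finset.mem_filter.mp hx).1
        have hfx := (Finset.mem_filter.mp hx).2
        have hx0 : x ≠ 0 := (hXpos x hxX).ne'
        have hxy : x ∣ y := hfx ▸ hdvd x hxX
        have hxley : x.factorization ≤ y.factorization :=
          (Nat.factorization_le_iff_dvd hx0 hy.ne').mpr hxy
        have hxm : x ∣ m := by
          rw [← Nat.factorization_le_iff_dvd hx0 hm0.ne']
          intro q
          rw [hfacm]
          simp only [Finsupp.tsub_apply]
          by_cases hq : q.Prime ∧ q ∣ y
          · have h1 := hv x hxX hfx q hq.1 hq.2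
            have h2 := hr1 q
            omega
          · have hyq : y.factorization q = 0 := by
              rcases not_and_or.mp hq with h | h
              · exact Nat.factorization_eq_zero_of_not_prime y h
              · exact Nat.factorization_eq_zero_of_not_dvd h
            have := hxley q
            omega
        exact Nat.mem_divisors.mpr ⟨hxm, hm0.ne'⟩
      have hm1 : 1 < m := by
        by_contra h
        have hm1' : m = 1 := by omega
        have : S.card ≤ 1 := by
          have : S ⊆ {1} := by
            intro x hx
            have := hsub hx
            rw [hm1'] at this
            simpa using this
          simpa using Finset.card_le_card this
        omega
      calc ∑ x ∈ S, x ≤ ∑ d ∈ m.divisors, d := Finset.sum_le_sum_of_subset hsub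
        _ < m * ∏ p ∈ m.primeFactors, p := sum_divisors_lt_mul_rad hm1
        _ ≤ m * r := by
            refine Nat.mul_le_mul_left m ?_
            refine Finset.prod_le_prod_of_subset_of_one_le'
              (Nat.primeFactors_mono hmdvd hy.ne') ?_
            intro p hp _
            exact (Nat.prime_of_mem_primeFactors hp).one_le
        _ = y := hmy
    · -- at most one preimage
      obtain ⟨x, hx⟩ := hS
      have hcard1 : S.card = 1 := by
        have := Finset.card_pos.mpr ⟨x, hx⟩
        omega
      obtain ⟨x₀, hx₀⟩ := Finset.card_eq_one.mp hcard1
      have hx₀S : x₀ ∈ S := by rw [hx₀]; exact Finset.mem_singleton_self x₀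
      have hx₀X := (Finset.mem_filter.mp hx₀S).1
      have hfx₀ := (Finset.mem_filter.mp hx₀S).2
      have hxy : x₀ ∣ y := hfx₀ ▸ hdvd x₀ hx₀X
      have hne : x₀ ≠ y := fun h => (Finset.disjoint_left.mp hXY hx₀X) (h ▸ hyY)
      rw [hx₀, Finset.sum_singleton]
      exact lt_of_le_of_ne (Nat.le_of_dvd hy hxy) hne
  rw [← Finset.sum_fiberwise_of_maps_to hf (fun x => x)]
  refine Finset.sum_lt_sum ?_ ?_
  · intro y hy
    rcases (X.filter (fun x => f x = y)).eq_empty_or_nonempty with h | h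
    · rw [h]; simp
    · exact (key y hy h).le
  · obtain ⟨x₀, hx₀⟩ := hX
    exact ⟨f x₀, hf x₀ hx₀, key _ (hf x₀ hx₀)
      ⟨x₀, Finset.mem_filter.mpr ⟨hx₀, rfl⟩⟩⟩
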